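/- In a k-geodetic digraph with minimum out-degree at least d, for every vertex u and every 0 ≤ l ≤ k, the number of vertices at distance exactly l from u is at least d^l. -/

import Mathlib

open scoped Classical

/-- There is a directed walk of length `n` from `u` to `v` in the digraph with
arc relation `A` (the walk is recorded as its list of `n+1` vertices). -/
def HasWalkLen {V : Type*} (A : V → V → Prop) (n : ℕ) (u v : V) : Prop :=
  ∃ l : List V, l.head? = some u ∧ l.getLast? = some v ∧ l.Chain' A ∧ l.length = n + 1

/-- The distance from `u` to `v` is at most `n`. -/
def DistLe {V : Type*} (A : V → V → Prop) (n : ℕ) (u v : V) : Prop :=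
  ∃ m ≤ n, HasWalkLen A m u v

/-- The distance from `u` to `v` is exactly `n`. -/
def DistEq {V : Type*} (A : V → V → Prop) (n : ℕ) (u v : V) : Prop :=
  HasWalkLen A n u v ∧ ∀ m < n, ¬ HasWalkLen A m u v

/-- A digraph is `k`-geodetic: between any ordered pair of vertices there is at
most one directed path of length at most `k`. -/
def Geodetic {V : Type*} (A : V → V → Prop) (k : ℕ) : Prop :=
  ∀ u v : V, ∀ l₁ l₂ : List V,
    (l₁.head? = some u ∧ l₁.getLast? = some v ∧ l₁.Chain' A ∧ l₁.length ≤ k + 1) →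
    (l₂.head? = some u ∧ l₂.getLast? = some v ∧ l₂.Chain' A ∧ l₂.length ≤ k + 1) →
    l₁ = l₂

/-- Out-neighbourhood. -/
def Nplus {V : Type*} (A : V → V → Prop) (u : V) : Set V := {v | A u v}

/-- Out-degree. -/
noncomputable def outDeg {V : Type*} (A : V → V → Prop) (u : V) : ℕ := {v | A u v}.ncard

/-- In-degree. -/
noncomputable def inDeg {V : Type*} (A : V → V → Prop) (u : V) : ℕ := {v | A v u}.ncard

/-- `T_k(u)`: the set of vertices at distance at most `k` from `u`. -/
def Tset {V : Type*} (A : V → V → Prop) (k : ℕ) (u : V) : Set V := {v | DistLe A k u v}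

/-- `O(u)`: the outliers of `u`, i.e. vertices at distance at least `k+1` from `u`. -/
def Outliers {V : Type*} (A : V → V → Prop) (k : ℕ) (u : V) : Set V := {v | ¬ DistLe A k u v}


lemma walk_zero {V : Type*} (A : V → V → Prop) (u : V) : HasWalkLen A 0 u u :=
  ⟨[u], rfl, rfl, List.isChain_singleton u, rfl⟩

lemma snoc_props {V : Type*} {A : V → V → Prop} {L : List V} {u v w : V} {n : ℕ}
    (h1 : L.head? = some u) (h2 : L.getLast? = some v) (h3 : L.Chain' A)
    (h4 : L.length = n + 1) (hvw : A v w) :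
    (L ++ [w]).head? = some u ∧ (L ++ [w]).getLast? = some w ∧
      (L ++ [w]).Chain' A ∧ (L ++ [w]).length = n + 2 := by
  have hne : L ≠ [] := by intro h; simp [h] at h4
  refine ⟨?_, ?_, ?_, by simp [h4]⟩
  · cases L with
    | nil => exact absurd rfl hne
    | cons a t => simpa using h1
  · simp
  · show List.IsChain A (L ++ [w])
    rw [List.isChain_append]
    refine ⟨h3, List.isChain_singleton w, ?_⟩
    intro x hx y hy
    rw [h2] at hx
    simp at hx hy
    subst hx; subst hy; exact hvw

lemma walk_snoc {V : Type*} {A : V → V → Prop} {n : ℕ} {u v w : V}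
    (h : HasWalkLen A n u v) (hvw : A v w) : HasWalkLen A (n + 1) u w := by
  obtain ⟨L, h1, h2, h3, h4⟩ := h
  obtain ⟨a, b, c, e⟩ := snoc_props h1 h2 h3 h4 hvw
  exact ⟨L ++ [w], a, b, c, e⟩

lemma step_distEq {V : Type*} {A : V → V → Prop} {k l : ℕ}
    (hgeo : Geodetic A k) (hlk : l + 1 ≤ k) {u v w : V}
    (hv : DistEq A l u v) (hvw : A v w) : DistEq A (l + 1) u w := by
  refine ⟨walk_snoc hv.1 hvw, ?_⟩
  intro m hm hwalk
  obtain ⟨L1, a1, b1, c1, e1⟩ := hwalk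
  obtain ⟨L2, a2, b2, c2, e2⟩ := walk_snoc hv.1 hvw
  have heq := hgeo u w L1 L2
    ⟨a1, b1, c1, by omega⟩ ⟨a2, b2, c2, by omega⟩
  have := congrArg List.length heq
  omega

lemma pred_unique {V : Type*} {A : V → V → Prop} {k l : ℕ}
    (hgeo : Geodetic A k) (hlk : l + 1 ≤ k) {u v₁ v₂ w : V}
    (hv1 : DistEq A l u v₁) (hv2 : DistEq A l u v₂)
    (h1 : A v₁ w) (h2 : A v₂ w) : v₁ = v₂ := by
  obtain ⟨L1, a1, b1, c1, e1⟩ := hv1.1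
  obtain ⟨L2, a2, b2, c2, e2⟩ := hv2.1
  obtain ⟨p1, q1, r1, s1⟩ := snoc_props a1 b1 c1 e1 h1
  obtain ⟨p2, q2, r2, s2⟩ := snoc_props a2 b2 c2 e2 h2
  have heq := hgeo u w (L1 ++ [w]) (L2 ++ [w])
    ⟨p1, q1, r1, by omega⟩ ⟨p2, q2, r2, by omega⟩
  have hL : L1 = L2 := by simpa using heq
  rw [hL, b2] at b1
  exact (Option.some_injective _ b1).symm

/-- In a `k`-geodetic digraph with minimum out-degree at least `d`, for every
vertex `u` and every `l ≤ k` there are at least `d^l` vertices at distance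
exactly `l` from `u`. -/
theorem stmt_2 {V : Type*} [Fintype V] (A : V → V → Prop) (d k : ℕ)
    (hgeo : Geodetic A k) (hdeg : ∀ u, d ≤ outDeg A u)
    (u : V) (l : ℕ) (hl : l ≤ k) :
    d ^ l ≤ {v | DistEq A l u v}.ncard := by
  induction l with
  | zero =>
    have hu : DistEq A 0 u u :=
      ⟨walk_zero A u, fun m hm => absurd hm (Nat.not_lt_zero m)⟩
    have hfin : ({v | DistEq A 0 u v}).Finite := Set.toFinite _
    have : 0 < ({v | DistEq A 0 u v}).ncard :=
      (Set.ncard_pos hfin).2 ⟨u, hu⟩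
    rw [pow_zero]; exact this
  | succ l ih =>
    have hSl := ih (Nat.le_of_succ_le hl)
    classical
    set S : Finset V := {v | DistEq A l u v}.toFinset with hS
    set T : Finset V := {w | DistEq A (l + 1) u w}.toFinset with hT
    have hsub : S.biUnion (fun v => {w | A v w}.toFinset) ⊆ T := by
      intro w hw
      rw [Finset.mem_biUnion] at hw
      obtain ⟨v, hv, hw⟩ := hw
      rw [hS, Set.mem_toFinset] at hv
      rw [Set.mem_toFinset] at hw
      rw [hT, Set.mem_toFinset]
      exact step_distEq hgeo hl hv hw
    have hdisj : ∀ v₁ ∈ S, ∀ v₂ ∈ S, v₁ ≠ v₂ →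
        Disjoint ({w | A v₁ w}.toFinset) ({w | A v₂ w}.toFinset) := by
      intro v₁ h1 v₂ h2 hne
      rw [hS, Set.mem_toFinset] at h1 h2
      rw [Finset.disjoint_left]
      intro w hw1 hw2
      rw [Set.mem_toFinset] at hw1 hw2
      exact hne (pred_unique hgeo hl h1 h2 hw1 hw2)
    have hcard : (S.biUnion (fun v => {w | A v w}.toFinset)).card =
        ∑ v ∈ S, ({w | A v w}.toFinset).card := Finset.card_biUnion hdisj
    have hdeg' : ∀ v, d ≤ ({w | A v w}.toFinset).card := by
      intro v
      have := hdeg v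
      rwa [outDeg, Set.ncard_eq_toFinset_card'] at this
    have hsum : d * S.card ≤ ∑ v ∈ S, ({w | A v w}.toFinset).card := by
      calc d * S.card = ∑ _v ∈ S, d := by rw [Finset.sum_const, smul_eq_mul, mul_comm]
        _ ≤ _ := Finset.sum_le_sum fun v _ => hdeg' v
    have hScard : d ^ l ≤ S.card := by
      rwa [hS, ← Set.ncard_eq_toFinset_card']
    have hTcard : {v | DistEq A (l + 1) u v}.ncard = T.card :=
      Set.ncard_eq_toFinset_card' _
    rw [hTcard]
    calc d ^ (l + 1) = d * d ^ l := by ring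
      _ ≤ d * S.card := Nat.mul_le_mul_left d hScard
      _ ≤ ∑ v ∈ S, ({w | A v w}.toFinset).card := hsum
      _ = (S.biUnion (fun v => {w | A v w}.toFinset)).card := hcard.symm
      _ ≤ T.card := Finset.card_le_card hsub
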